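/- Let k be a field, A a k-vector space, and t₁, t₂ : A ⊗ A → A ⊗ A, e : A → k linear maps (tensor products over k; τ denotes the flip v ⊗ w ↦ w ⊗ v; composition is right-to-left) such that: t₁ satisfies the fusion equation (t₁ ⊗ 1) ∘ (τ ⊗ 1) ∘ (1 ⊗ t₁) ∘ (τ ⊗ 1) ∘ (1 ⊗ t₁) = (1 ⊗ t₁) ∘ (t₁ ⊗ 1) and (1 ⊗ e) ∘ t₁ = 1 ⊗ e; t₂ satisfies (1 ⊗ t₂) ∘ (1 ⊗ τ) ∘ (t₂ ⊗ 1) ∘ (1 ⊗ τ) ∘ (t₂ ⊗ 1) = (t₂ ⊗ 1) ∘ (1 ⊗ t₂) and (e ⊗ 1) ∘ t₂ = e ⊗ 1; (t₂ ⊗ 1) ∘ (1 ⊗ t₁) = (1 ⊗ t₁) ∘ (t₂ ⊗ 1); and (e ⊗ 1) ∘ t₁ = (1 ⊗ e) ∘ t₂ =: m : A ⊗ A → A. Assume further that m, (m ⊗ 1) ∘ (τ ⊗ 1) ∘ (1 ⊗ t₁) and (1 ⊗ m) ∘ (1 ⊗ τ) ∘ (t₂ ⊗ 1) are surjective, and that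 m is non-degenerate (both maps A → Hom_k(A, A), a ↦ m(a ⊗ −) and a ↦ m(− ⊗ a), are injective). Then the multiplier bialgebra axioms hold; in particular: (c) e ∘ m = (multiplication of k) ∘ (e ⊗ e), and (a) t₁ ∘ (m ⊗ 1) = (m ⊗ 1) ∘ (τ ⊗ 1) ∘ (1 ⊗ t₁) ∘ (τ ⊗ 1) ∘ (1 ⊗ t₁), equivalently t₂ ∘ (1 ⊗ m) = (1 ⊗ m) ∘ (1 ⊗ τ) ∘ (t₂ ⊗ 1) ∘ (1 ⊗ τ) ∘ (t₂ ⊗ 1). -/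

import Mathlib

open TensorProduct LinearMap

variable {k : Type*} [Field k] {A : Type*} [AddCommGroup A] [Module k A]

/-- The flip map `τ : A ⊗ A → A ⊗ A`. -/
noncomputable def flipMap (k A : Type*) [Field k] [AddCommGroup A] [Module k A] :
    A ⊗[k] A →ₗ[k] A ⊗[k] A :=
  (TensorProduct.comm k A A).toLinearMap

/-- A map `A ⊗ A → A ⊗ A` acting on the last two factors of `(A ⊗ A) ⊗ A`
(conjugation of `1 ⊗ f` by the associator). -/
noncomputable def lastTwo (k A : Type*) [Field k] [AddCommGroup A] [Module k A]
    (f : A ⊗[k] A →ₗ[k] A ⊗[k] A) :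
    (A ⊗[k] A) ⊗[k] A →ₗ[k] (A ⊗[k] A) ⊗[k] A :=
  (TensorProduct.assoc k A A A).symm.toLinearMap ∘ₗ lTensor A f ∘ₗ
    (TensorProduct.assoc k A A A).toLinearMap

/-- A map `A ⊗ A → A ⊗ A` acting on the first two factors of `A ⊗ (A ⊗ A)`
(conjugation of `f ⊗ 1` by the associator). -/
noncomputable def firstTwo (k A : Type*) [Field k] [AddCommGroup A] [Module k A]
    (f : A ⊗[k] A →ₗ[k] A ⊗[k] A) :
    A ⊗[k] (A ⊗[k] A) →ₗ[k] A ⊗[k] (A ⊗[k] A) :=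
  (TensorProduct.assoc k A A A).toLinearMap ∘ₗ rTensor A f ∘ₗ
    (TensorProduct.assoc k A A A).symm.toLinearMap

/-- `(1 ⊗ e) : A ⊗ A → A`, i.e. `1 ⊗ e` followed by the right unitor. -/
noncomputable def oneCounit (k A : Type*) [Field k] [AddCommGroup A] [Module k A]
    (e : A →ₗ[k] k) : A ⊗[k] A →ₗ[k] A :=
  (TensorProduct.rid k A).toLinearMap ∘ₗ lTensor A e

/-- `(e ⊗ 1) : A ⊗ A → A`, i.e. `e ⊗ 1` followed by the left unitor. -/
noncomputable def counitOne (k A : Type*) [Field k] [AddCommGroup A] [Module k A]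
    (e : A →ₗ[k] k) : A ⊗[k] A →ₗ[k] A :=
  (TensorProduct.lid k A).toLinearMap ∘ₗ rTensor A e



section Aux

variable (e : A →ₗ[k] k)

/-- `H : A ⊗ (A ⊗ A) → A ⊗ A`, `a ⊗ x ↦ e(a) • x`. -/
noncomputable def Hmap : A ⊗[k] (A ⊗[k] A) →ₗ[k] A ⊗[k] A :=
  (TensorProduct.lid k (A ⊗[k] A)).toLinearMap ∘ₗ rTensor (A ⊗[k] A) e

/-- `F : (A ⊗ A) ⊗ A → A ⊗ A`, `x ⊗ c ↦ e(c) • x`. -/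
noncomputable def Fmap : (A ⊗[k] A) ⊗[k] A →ₗ[k] A ⊗[k] A :=
  (TensorProduct.rid k (A ⊗[k] A)).toLinearMap ∘ₗ lTensor (A ⊗[k] A) e

lemma Hmap_tmul (a : A) (x : A ⊗[k] A) : Hmap e (a ⊗ₜ[k] x) = e a • x := by
  simp [Hmap]

lemma Fmap_tmul (x : A ⊗[k] A) (c : A) : Fmap e (x ⊗ₜ[k] c) = e c • x := by
  simp [Fmap]

lemma counitOne_tmul (a b : A) : counitOne k A e (a ⊗ₜ[k] b) = e a • b := by
  simp [counitOne]

lemma oneCounit_tmul (a b : A) : oneCounit k A e (a ⊗ₜ[k] b) = e b • a := by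
  simp [oneCounit]

lemma Hmap_assoc :
    Hmap e ∘ₗ (TensorProduct.assoc k A A A).toLinearMap =
      rTensor A (counitOne k A e) := by
  apply TensorProduct.ext_threefold
  intro a b c
  simp [Hmap_tmul, counitOne_tmul, smul_tmul']

lemma Fmap_assoc :
    lTensor A (oneCounit k A e) ∘ₗ (TensorProduct.assoc k A A A).toLinearMap =
      Fmap e := by
  apply TensorProduct.ext_threefold
  intro a b c
  simp [Fmap_tmul, oneCounit_tmul, tmul_smul]

lemma G_assoc_symm (a : A) (x : A ⊗[k] A) :
    rTensor A (counitOne k A e) ((TensorProduct.assoc k A A A).symm (a ⊗ₜ[k] x)) =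
      e a • x := by
  have h := LinearMap.congr_fun (Hmap_assoc (A := A) e)
    ((TensorProduct.assoc k A A A).symm (a ⊗ₜ[k] x))
  simp only [coe_comp, Function.comp_apply, LinearEquiv.coe_coe,
    LinearEquiv.apply_symm_apply, Hmap_tmul] at h
  exact h.symm

lemma F_assoc_symm (a : A) (x : A ⊗[k] A) :
    Fmap e ((TensorProduct.assoc k A A A).symm (a ⊗ₜ[k] x)) =
      a ⊗ₜ[k] oneCounit k A e x := by
  have h := LinearMap.congr_fun (Fmap_assoc (A := A) e)
    ((TensorProduct.assoc k A A A).symm (a ⊗ₜ[k] x))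
  simp only [coe_comp, Function.comp_apply, LinearEquiv.coe_coe,
    LinearEquiv.apply_symm_apply, lTensor_tmul] at h
  exact h.symm

lemma G_lastTwo (f : A ⊗[k] A →ₗ[k] A ⊗[k] A) :
    rTensor A (counitOne k A e) ∘ₗ lastTwo k A f =
      f ∘ₗ rTensor A (counitOne k A e) := by
  apply TensorProduct.ext_threefold
  intro a b c
  have h1 : lastTwo k A f ((a ⊗ₜ[k] b) ⊗ₜ[k] c) =
      (TensorProduct.assoc k A A A).symm (a ⊗ₜ[k] f (b ⊗ₜ[k] c)) := by
    simp [lastTwo]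
  simp only [coe_comp, Function.comp_apply, h1, G_assoc_symm, rTensor_tmul,
    counitOne_tmul]
  rw [← smul_tmul', map_smul]

lemma F_lastTwo (f : A ⊗[k] A →ₗ[k] A ⊗[k] A) :
    Fmap e ∘ₗ lastTwo k A f =
      lTensor A (oneCounit k A e ∘ₗ f) ∘ₗ (TensorProduct.assoc k A A A).toLinearMap := by
  apply TensorProduct.ext_threefold
  intro a b c
  have h1 : lastTwo k A f ((a ⊗ₜ[k] b) ⊗ₜ[k] c) =
      (TensorProduct.assoc k A A A).symm (a ⊗ₜ[k] f (b ⊗ₜ[k] c)) := by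
    simp [lastTwo]
  simp only [coe_comp, Function.comp_apply, h1, F_assoc_symm, LinearEquiv.coe_coe,
    assoc_tmul, lTensor_tmul]

lemma F_rTensor (f : A ⊗[k] A →ₗ[k] A ⊗[k] A) :
    Fmap e ∘ₗ rTensor A f = f ∘ₗ Fmap e := by
  apply TensorProduct.ext'
  intro x c
  simp [Fmap_tmul]

lemma assoc_symm_comp_assoc :
    (TensorProduct.assoc k A A A).symm.toLinearMap ∘ₗ
      (TensorProduct.assoc k A A A).toLinearMap = LinearMap.id (R := k) (M := (A ⊗[k] A) ⊗[k] A) := by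
  apply TensorProduct.ext_threefold
  intro a b c
  simp

lemma assoc_lastTwo (f : A ⊗[k] A →ₗ[k] A ⊗[k] A) :
    (TensorProduct.assoc k A A A).toLinearMap ∘ₗ lastTwo k A f =
      lTensor A f ∘ₗ (TensorProduct.assoc k A A A).toLinearMap := by
  apply TensorProduct.ext_threefold
  intro a b c
  simp [lastTwo]

lemma assoc_rTensor (f : A ⊗[k] A →ₗ[k] A ⊗[k] A) :
    (TensorProduct.assoc k A A A).toLinearMap ∘ₗ rTensor A f =
      firstTwo k A f ∘ₗ (TensorProduct.assoc k A A A).toLinearMap := by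
  unfold firstTwo
  rw [comp_assoc, comp_assoc, assoc_symm_comp_assoc, comp_id]

lemma oneCounit_flip : oneCounit k A e ∘ₗ flipMap k A = counitOne k A e := by
  apply TensorProduct.ext'
  intro a b
  simp [flipMap, oneCounit_tmul, counitOne_tmul]

end Aux


lemma comp_left_move {M N P Q R : Type*} [AddCommGroup M] [Module k M]
    [AddCommGroup N] [Module k N] [AddCommGroup P] [Module k P]
    [AddCommGroup Q] [Module k Q] [AddCommGroup R] [Module k R]
    {f₁ : N →ₗ[k] P} {g₁ : M →ₗ[k] N} {g₂ : Q →ₗ[k] P} {f₂ : M →ₗ[k] Q}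
    (h : f₁ ∘ₗ g₁ = g₂ ∘ₗ f₂) (x : R →ₗ[k] M) :
    f₁ ∘ₗ (g₁ ∘ₗ x) = g₂ ∘ₗ (f₂ ∘ₗ x) := by
  rw [← comp_assoc, h, comp_assoc]

lemma comp_left_fuse {M N P R : Type*} [AddCommGroup M] [Module k M]
    [AddCommGroup N] [Module k N] [AddCommGroup P] [Module k P]
    [AddCommGroup R] [Module k R]
    {f₁ : N →ₗ[k] P} {g₁ : M →ₗ[k] N} {p : M →ₗ[k] P}
    (h : f₁ ∘ₗ g₁ = p) (x : R →ₗ[k] M) :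
    f₁ ∘ₗ (g₁ ∘ₗ x) = p ∘ₗ x := by
  rw [← comp_assoc, h]

/-- A multiplier bimonoid `(t₁, t₂, e)` in `vec` whose multiplication `m` is
surjective and non-degenerate, and for which `(m ⊗ 1)(τ ⊗ 1)(1 ⊗ t₁)` and
`(1 ⊗ m)(1 ⊗ τ)(t₂ ⊗ 1)` are surjective, is a multiplier bialgebra; in
particular the multiplier bialgebra axioms (c) and (a) hold. -/
theorem multiplierBialgebra_of_multiplierBimonoid
    (t₁ t₂ : A ⊗[k] A →ₗ[k] A ⊗[k] A) (e : A →ₗ[k] k)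
    -- `t₁` is a counital fusion morphism
    (hfus₁ : rTensor A t₁ ∘ₗ rTensor A (flipMap k A) ∘ₗ lastTwo k A t₁ ∘ₗ
        rTensor A (flipMap k A) ∘ₗ lastTwo k A t₁ =
      lastTwo k A t₁ ∘ₗ rTensor A t₁)
    (hcou₁ : oneCounit k A e ∘ₗ t₁ = oneCounit k A e)
    -- `t₂` is a counital fusion morphism in the reverse category
    (hfus₂ : lastTwo k A t₂ ∘ₗ lastTwo k A (flipMap k A) ∘ₗ rTensor A t₂ ∘ₗ
        lastTwo k A (flipMap k A) ∘ₗ rTensor A t₂ =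
      rTensor A t₂ ∘ₗ lastTwo k A t₂)
    (hcou₂ : counitOne k A e ∘ₗ t₂ = counitOne k A e)
    -- compatibility: `(t₂ ⊗ 1) ∘ (1 ⊗ t₁) = (1 ⊗ t₁) ∘ (t₂ ⊗ 1)`
    (hcompat : rTensor A t₂ ∘ₗ lastTwo k A t₁ = lastTwo k A t₁ ∘ₗ rTensor A t₂)
    -- the two counit conditions give the same multiplication `m`
    (hm : counitOne k A e ∘ₗ t₁ = oneCounit k A e ∘ₗ t₂)
    -- surjectivity assumptions
    (hmsurj : Function.Surjective (counitOne k A e ∘ₗ t₁))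
    (hsurj₁ : Function.Surjective
      (rTensor A (counitOne k A e ∘ₗ t₁) ∘ₗ rTensor A (flipMap k A) ∘ₗ
        lastTwo k A t₁))
    (hsurj₂ : Function.Surjective
      (lTensor A (counitOne k A e ∘ₗ t₁) ∘ₗ lTensor A (flipMap k A) ∘ₗ
        (TensorProduct.assoc k A A A).toLinearMap ∘ₗ rTensor A t₂))
    -- non-degeneracy of `m`
    (hnd₁ : ∀ a b : A,
      (∀ x : A, (counitOne k A e ∘ₗ t₁) (a ⊗ₜ[k] x) =
        (counitOne k A e ∘ₗ t₁) (b ⊗ₜ[k] x)) → a = b)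
    (hnd₂ : ∀ a b : A,
      (∀ x : A, (counitOne k A e ∘ₗ t₁) (x ⊗ₜ[k] a) =
        (counitOne k A e ∘ₗ t₁) (x ⊗ₜ[k] b)) → a = b) :
    -- axiom (c): `e ∘ m = (multiplication of k) ∘ (e ⊗ e)`
    (e ∘ₗ (counitOne k A e ∘ₗ t₁) = LinearMap.mul' k k ∘ₗ TensorProduct.map e e) ∧
    -- axiom (a): `t₁ ∘ (m ⊗ 1) = (m ⊗ 1) ∘ (τ ⊗ 1) ∘ (1 ⊗ t₁) ∘ (τ ⊗ 1) ∘ (1 ⊗ t₁)`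
    (t₁ ∘ₗ rTensor A (counitOne k A e ∘ₗ t₁) =
      rTensor A (counitOne k A e ∘ₗ t₁) ∘ₗ rTensor A (flipMap k A) ∘ₗ
        lastTwo k A t₁ ∘ₗ rTensor A (flipMap k A) ∘ₗ lastTwo k A t₁) ∧
    -- equivalently, `t₂ ∘ (1 ⊗ m) = (1 ⊗ m) ∘ (1 ⊗ τ) ∘ (t₂ ⊗ 1) ∘ (1 ⊗ τ) ∘ (t₂ ⊗ 1)`
    (t₂ ∘ₗ lTensor A (counitOne k A e ∘ₗ t₁) =
      lTensor A (counitOne k A e ∘ₗ t₁) ∘ₗ lTensor A (flipMap k A) ∘ₗ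
        firstTwo k A t₂ ∘ₗ lTensor A (flipMap k A) ∘ₗ firstTwo k A t₂) := by
  have hGt : rTensor A (counitOne k A e) ∘ₗ rTensor A t₁ =
      rTensor A (counitOne k A e ∘ₗ t₁) := (rTensor_comp A _ _).symm
  have hFL : Fmap e ∘ₗ lastTwo k A t₂ =
      lTensor A (counitOne k A e ∘ₗ t₁) ∘ₗ (TensorProduct.assoc k A A A).toLinearMap := by
    rw [F_lastTwo, ← hm]
  refine ⟨?_, ?_, ?_⟩
  · -- axiom (c)
    have h1 : e ∘ₗ counitOne k A e = LinearMap.mul' k k ∘ₗ TensorProduct.map e e := by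
      apply TensorProduct.ext'
      intro a b
      simp [counitOne_tmul, smul_eq_mul, mul_comm]
    have h2 : e ∘ₗ oneCounit k A e = LinearMap.mul' k k ∘ₗ TensorProduct.map e e := by
      apply TensorProduct.ext'
      intro a b
      simp [oneCounit_tmul, smul_eq_mul, mul_comm]
    calc e ∘ₗ (counitOne k A e ∘ₗ t₁) = (e ∘ₗ counitOne k A e) ∘ₗ t₁ :=
          (comp_assoc _ _ _).symm
      _ = (e ∘ₗ oneCounit k A e) ∘ₗ t₁ := by rw [h1, h2]
      _ = e ∘ₗ (oneCounit k A e ∘ₗ t₁) := comp_assoc _ _ _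
      _ = e ∘ₗ oneCounit k A e := by rw [hcou₁]
      _ = LinearMap.mul' k k ∘ₗ TensorProduct.map e e := h2
  · -- axiom (a)
    have key := congrArg (fun g => rTensor A (counitOne k A e) ∘ₗ g) hfus₁
    rw [comp_left_fuse hGt, comp_left_move (G_lastTwo e t₁), hGt] at key
    exact key.symm
  · -- axiom (a')
    have key := congrArg (fun g => Fmap e ∘ₗ g) hfus₂
    rw [comp_left_fuse hFL, comp_assoc,
      comp_left_move (assoc_lastTwo (flipMap k A)),
      comp_left_move (assoc_rTensor t₂),
      comp_left_move (assoc_lastTwo (flipMap k A)),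
      assoc_rTensor t₂,
      comp_left_move (F_rTensor e t₂), hFL] at key
    rw [← cancel_right (TensorProduct.assoc k A A A).surjective]
    simp only [comp_assoc]
    exact key.symm
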